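/- Let H be a connected k-uniform hypergraph on n ≥ 2 vertices with diameter d. Then λ_{n-1}(H) > 2/(d·k·(k-1)^2·vol(V(H))), where vol(V(H)) = Σ_{v} d_v = km with m the number of edges. -/

import Mathlib

open Finset

variable {n : ℕ}

def hdeg (E : Finset (Finset (Fin n))) (v : Fin n) : ℕ :=
  (E.filter fun e => v ∈ e).card

def codeg (E : Finset (Finset (Fin n))) (u v : Fin n) : ℕ :=
  (E.filter fun e => u ∈ e ∧ v ∈ e).card

noncomputable def adjMat (E : Finset (Finset (Fin n))) : Matrix (Fin n) (Fin n) ℝ :=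
  fun u v => if u = v then 0
    else ∑ e ∈ E.filter (fun e => u ∈ e ∧ v ∈ e), (1 : ℝ) / ((e.card : ℝ) - 1)

noncomputable def lapMat (E : Finset (Finset (Fin n))) : Matrix (Fin n) (Fin n) ℝ :=
  Matrix.diagonal (fun v => (hdeg E v : ℝ)) - adjMat E

noncomputable def normLap (E : Finset (Finset (Fin n))) : Matrix (Fin n) (Fin n) ℝ :=
  Matrix.diagonal (fun v => (hdeg E v : ℝ) ^ (-(1/2) : ℝ)) * lapMat E *
    Matrix.diagonal (fun v => (hdeg E v : ℝ) ^ (-(1/2) : ℝ))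

noncomputable def eigsAsc (M : Matrix (Fin n) (Fin n) ℝ) : Fin n → ℝ :=
  if h : M.IsHermitian then (h.eigenvalues ∘ Tuple.sort h.eigenvalues) else 0

def hreach {n : ℕ} (E : Finset (Finset (Fin n))) (L : ℕ) (u v : Fin n) : Prop :=
  ∃ p : ℕ → Fin n, p 0 = u ∧ p L = v ∧ ∀ i < L, ∃ e ∈ E, p i ∈ e ∧ p (i + 1) ∈ e

noncomputable def hdist {n : ℕ} (E : Finset (Finset (Fin n))) (u v : Fin n) : ℕ :=
  sInf {L | hreach E L u v}

/-! ### Auxiliary definitions -/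

/-- per-edge contribution to the Dirichlet form -/
noncomputable def st15Te (k : ℕ) (f : Fin n → ℝ) (e : Finset (Fin n)) : ℝ :=
  ((k : ℝ) * ∑ v ∈ e, f v ^ 2 - (∑ v ∈ e, f v) ^ 2) / ((k : ℝ) - 1)

/-- total Dirichlet form -/
noncomputable def st15Q (E : Finset (Finset (Fin n))) (k : ℕ) (f : Fin n → ℝ) : ℝ :=
  ∑ e ∈ E, st15Te k f e

lemma st15_pair_sum (e : Finset (Fin n)) (f : Fin n → ℝ) :
    ∑ a ∈ e, ∑ b ∈ e, (f a - f b) ^ 2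
      = 2 * ((e.card : ℝ) * ∑ v ∈ e, f v ^ 2 - (∑ v ∈ e, f v) ^ 2) := by
  have h1 : ∀ a : Fin n, ∑ b ∈ e, (f a - f b) ^ 2
      = (e.card : ℝ) * f a ^ 2 - 2 * f a * (∑ b ∈ e, f b) + ∑ b ∈ e, f b ^ 2 := by
    intro a
    rw [show (∑ b ∈ e, (f a - f b) ^ 2)
        = ∑ b ∈ e, (f a ^ 2 - 2 * f a * f b + f b ^ 2) from
      Finset.sum_congr rfl fun b _ => by ring]
    rw [Finset.sum_add_distrib, Finset.sum_sub_distrib, Finset.sum_const,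
      ← Finset.mul_sum, nsmul_eq_mul]
  rw [Finset.sum_congr rfl fun a _ => h1 a]
  rw [Finset.sum_add_distrib, Finset.sum_sub_distrib, Finset.sum_const,
    ← Finset.mul_sum, ← Finset.sum_mul, nsmul_eq_mul]
  rw [show (∑ x ∈ e, 2 * f x) = 2 * ∑ x ∈ e, f x from (Finset.mul_sum e f 2).symm]
  ring

lemma st15Te_nonneg {k : ℕ} (hk : 2 ≤ k) {e : Finset (Fin n)} (hcard : e.card = k)
    (f : Fin n → ℝ) : 0 ≤ st15Te k f e := by
  have hk1 : (0:ℝ) < (k:ℝ) - 1 := by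
    have : (2:ℝ) ≤ (k:ℝ) := by exact_mod_cast hk
    linarith
  have h := st15_pair_sum e f
  rw [hcard] at h
  have hnn : (0:ℝ) ≤ ∑ a ∈ e, ∑ b ∈ e, (f a - f b) ^ 2 :=
    Finset.sum_nonneg fun a _ => Finset.sum_nonneg fun b _ => sq_nonneg _
  rw [st15Te]
  apply div_nonneg _ (le_of_lt hk1)
  linarith

lemma st15Te_pair {k : ℕ} (hk : 2 ≤ k) {e : Finset (Fin n)} (hcard : e.card = k)
    (f : Fin n → ℝ) {a b : Fin n} (ha : a ∈ e) (hb : b ∈ e) :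
    (f a - f b) ^ 2 ≤ ((k : ℝ) - 1) * st15Te k f e := by
  have hk1 : (0:ℝ) < (k:ℝ) - 1 := by
    have : (2:ℝ) ≤ (k:ℝ) := by exact_mod_cast hk
    linarith
  have hTe : ((k : ℝ) - 1) * st15Te k f e
      = (k : ℝ) * ∑ v ∈ e, f v ^ 2 - (∑ v ∈ e, f v) ^ 2 := by
    rw [st15Te, mul_div_cancel₀ _ (ne_of_gt hk1)]
  have h := st15_pair_sum e f
  rw [hcard] at h
  rcases eq_or_ne a b with rfl | hab
  · rw [hTe]
    nlinarith [Finset.sum_nonneg (fun x (_ : x ∈ e) => Finset.sum_nonneg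
      (fun y (_ : y ∈ e) => sq_nonneg (f x - f y)))]
  · have hsub : {a, b} ⊆ e := by
      intro x hx
      rcases Finset.mem_insert.mp hx with rfl | hx
      · exact ha
      · rw [Finset.mem_singleton.mp hx]; exact hb
    have hle : ∑ x ∈ ({a, b} : Finset (Fin n)), ∑ y ∈ e, (f x - f y) ^ 2
        ≤ ∑ x ∈ e, ∑ y ∈ e, (f x - f y) ^ 2 := by
      apply Finset.sum_le_sum_of_subset_of_nonneg hsub
      intro x _ _
      exact Finset.sum_nonneg fun y _ => sq_nonneg _
    rw [Finset.sum_pair hab] at hle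
    have h1 : (f a - f b) ^ 2 ≤ ∑ y ∈ e, (f a - f y) ^ 2 :=
      Finset.single_le_sum (f := fun y => (f a - f y) ^ 2) (fun y _ => sq_nonneg _) hb
    have h2 : (f b - f a) ^ 2 ≤ ∑ y ∈ e, (f b - f y) ^ 2 :=
      Finset.single_le_sum (f := fun y => (f b - f y) ^ 2) (fun y _ => sq_nonneg _) ha
    rw [hTe]
    nlinarith [sq_abs (f a - f b)]

lemma st15_adj_symm (E : Finset (Finset (Fin n))) (u v : Fin n) :
    adjMat E u v = adjMat E v u := by
  unfold adjMat
  rcases eq_or_ne u v with rfl | h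
  · rfl
  · rw [if_neg h, if_neg h.symm]
    apply Finset.sum_congr _ fun _ _ => rfl
    apply Finset.filter_congr
    intro e _
    simp [and_comm]

lemma st15_normLap_apply (E : Finset (Finset (Fin n))) (i j : Fin n) :
    normLap E i j = (hdeg E i : ℝ) ^ (-(1/2) : ℝ) * lapMat E i j *
      (hdeg E j : ℝ) ^ (-(1/2) : ℝ) := by
  unfold normLap
  rw [Matrix.mul_diagonal, Matrix.diagonal_mul]

lemma st15_herm (E : Finset (Finset (Fin n))) : (normLap E).IsHermitian := by
  apply Matrix.ext
  intro i j
  rw [Matrix.conjTranspose_apply]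
  rw [show ∀ x : ℝ, star x = x from fun x => rfl]
  rw [st15_normLap_apply, st15_normLap_apply]
  unfold lapMat
  rw [Matrix.sub_apply, Matrix.sub_apply, st15_adj_symm E j i]
  rcases eq_or_ne i j with rfl | h1
  · ring
  · rw [Matrix.diagonal_apply_ne _ h1, Matrix.diagonal_apply_ne _ (Ne.symm h1)]
    ring

lemma st15_adj_apply {k : ℕ} (E : Finset (Finset (Fin n)))
    (hunif : ∀ e ∈ E, e.card = k) (v u : Fin n) :
    adjMat E v u = ∑ e ∈ E, (if v ∈ e ∧ u ∈ e ∧ v ≠ u then ((k : ℝ) - 1)⁻¹ else 0) := by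
  unfold adjMat
  rcases eq_or_ne v u with rfl | h
  · rw [if_pos rfl]
    symm
    apply Finset.sum_eq_zero
    intro e he
    simp
  · rw [if_neg h, Finset.sum_filter]
    apply Finset.sum_congr rfl
    intro e he
    by_cases h2 : v ∈ e ∧ u ∈ e
    · rw [if_pos h2, if_pos ⟨h2.1, h2.2, h⟩, hunif e he, one_div]
    · rw [if_neg h2, if_neg (by tauto)]

lemma st15_deg_sum (E : Finset (Finset (Fin n))) (f : Fin n → ℝ) :
    ∑ v : Fin n, (hdeg E v : ℝ) * f v = ∑ e ∈ E, ∑ v ∈ e, f v := by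
  have h1 : ∀ v : Fin n, (hdeg E v : ℝ) * f v = ∑ e ∈ E, (if v ∈ e then f v else 0) := by
    intro v
    rw [hdeg, Finset.card_filter]
    push_cast
    rw [Finset.sum_mul]
    apply Finset.sum_congr rfl
    intro e he
    by_cases h : v ∈ e <;> simp [h]
  rw [Finset.sum_congr rfl fun v _ => h1 v, Finset.sum_comm]
  apply Finset.sum_congr rfl
  intro e _
  rw [Finset.sum_ite_mem, Finset.univ_inter]

lemma st15_quadform {k : ℕ} (hk : 2 ≤ k) (E : Finset (Finset (Fin n)))
    (hunif : ∀ e ∈ E, e.card = k) (g : Fin n → ℝ) :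
    ∑ v : Fin n, g v * ((normLap E).mulVec g) v
      = st15Q E k (fun v => ((hdeg E v : ℝ)) ^ (-(1/2) : ℝ) * g v) := by
  have hk1 : ((k:ℝ) - 1) ≠ 0 := by
    have : (2:ℝ) ≤ (k:ℝ) := by exact_mod_cast hk
    linarith
  set f : Fin n → ℝ := fun v => ((hdeg E v : ℝ)) ^ (-(1/2) : ℝ) * g v with hf
  have hmv : ∀ v, ((normLap E).mulVec g) v = ∑ u, normLap E v u * g u := by
    intro v
    simp [Matrix.mulVec, dotProduct]
  -- the inner-double-sum evaluation
  have he1 : ∀ (e : Finset (Fin n)) (c : ℝ),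
      ∑ v : Fin n, ∑ u : Fin n, (if v ∈ e ∧ u ∈ e ∧ v ≠ u then f v * f u * c else 0)
      = ((∑ v ∈ e, f v) ^ 2 - ∑ v ∈ e, f v ^ 2) * c := by
    intro e c
    rw [← Finset.sum_subset (Finset.subset_univ e)
      (fun x _ hx => Finset.sum_eq_zero fun u _ => if_neg (by tauto))]
    rw [Finset.sum_congr rfl (fun v hv => (Finset.sum_subset (Finset.subset_univ e)
      (fun u _ hu => if_neg (by tauto))).symm)]
    have hrow : ∀ v ∈ e, ∑ u ∈ e, (if v ∈ e ∧ u ∈ e ∧ v ≠ u then f v * f u * c else 0)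
        = (∑ u ∈ e, f v * f u * c) - f v * f v * c := by
      intro v hv
      rw [Finset.sum_congr rfl (fun u hu => show
          (if v ∈ e ∧ u ∈ e ∧ v ≠ u then f v * f u * c else 0)
            = f v * f u * c - (if v = u then f v * f u * c else 0) from by
        by_cases h : v = u <;> simp [h, hv, hu])]
      rw [Finset.sum_sub_distrib, Finset.sum_ite_eq e v (fun u => f v * f u * c), if_pos hv]
    rw [Finset.sum_congr rfl hrow, Finset.sum_sub_distrib]
    have hsq : ∑ v ∈ e, ∑ u ∈ e, f v * f u * c = (∑ v ∈ e, f v) * (∑ u ∈ e, f u) * c := by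
      rw [Finset.sum_congr rfl (fun v (_ : v ∈ e) => show
          ∑ u ∈ e, f v * f u * c = f v * (∑ u ∈ e, f u) * c from by
        rw [← Finset.sum_mul, ← Finset.mul_sum])]
      rw [← Finset.sum_mul, ← Finset.sum_mul]
    have hdg : ∑ v ∈ e, f v * f v * c = (∑ v ∈ e, f v ^ 2) * c := by
      rw [← Finset.sum_mul]
      congr 1
      exact Finset.sum_congr rfl fun v _ => by ring
    rw [hsq, hdg]
    ring
  have hadj : ∑ v : Fin n, ∑ u : Fin n, f v * adjMat E v u * f u
      = ∑ e ∈ E, ((∑ v ∈ e, f v) ^ 2 - ∑ v ∈ e, f v ^ 2) * ((k:ℝ) - 1)⁻¹ := by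
    have h1 : ∀ v u : Fin n, f v * adjMat E v u * f u
        = ∑ e ∈ E, (if v ∈ e ∧ u ∈ e ∧ v ≠ u then f v * f u * ((k:ℝ) - 1)⁻¹ else 0) := by
      intro v u
      rw [st15_adj_apply E hunif, Finset.mul_sum, Finset.sum_mul]
      apply Finset.sum_congr rfl
      intro e he
      by_cases h2 : v ∈ e ∧ u ∈ e ∧ v ≠ u
      · rw [if_pos h2, if_pos h2]; ring
      · rw [if_neg h2, if_neg h2]; ring
    rw [Finset.sum_congr rfl (fun v (_ : v ∈ Finset.univ) =>
      Finset.sum_congr rfl (fun u (_ : u ∈ Finset.univ) => h1 v u))]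
    rw [Finset.sum_congr rfl (fun v (_ : v ∈ Finset.univ) => Finset.sum_comm)]
    rw [Finset.sum_comm]
    exact Finset.sum_congr rfl fun e _ => he1 e _
  calc ∑ v : Fin n, g v * ((normLap E).mulVec g) v
      = ∑ v : Fin n, ∑ u : Fin n, f v * lapMat E v u * f u := by
        apply Finset.sum_congr rfl
        intro v _
        rw [hmv, Finset.mul_sum]
        apply Finset.sum_congr rfl
        intro u _
        rw [st15_normLap_apply]
        simp only [hf]
        ring
    _ = (∑ v : Fin n, (hdeg E v : ℝ) * f v ^ 2)
        - ∑ v : Fin n, ∑ u : Fin n, f v * adjMat E v u * f u := by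
        rw [← Finset.sum_sub_distrib]
        apply Finset.sum_congr rfl
        intro v _
        unfold lapMat
        rw [show ∑ u : Fin n, f v * (Matrix.diagonal (fun x => (hdeg E x : ℝ)) - adjMat E) v u * f u
            = ∑ u : Fin n, ((if v = u then f v * (hdeg E v : ℝ) * f u else 0)
              - f v * adjMat E v u * f u) from Finset.sum_congr rfl fun u _ => by
          rw [Matrix.sub_apply, Matrix.diagonal_apply]
          by_cases h : v = u <;> simp [h] <;> ring]
        rw [Finset.sum_sub_distrib, Finset.sum_ite_eq Finset.univ v
          (fun u => f v * (hdeg E v : ℝ) * f u), if_pos (Finset.mem_univ v)]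
        congr 1
        ring
    _ = (∑ e ∈ E, ∑ v ∈ e, f v ^ 2)
        - ∑ e ∈ E, ((∑ v ∈ e, f v) ^ 2 - ∑ v ∈ e, f v ^ 2) * ((k:ℝ) - 1)⁻¹ := by
        rw [st15_deg_sum E (fun v => f v ^ 2), hadj]
    _ = st15Q E k f := by
        rw [st15Q, ← Finset.sum_sub_distrib]
        apply Finset.sum_congr rfl
        intro e he
        rw [st15Te]
        field_simp
        ring

lemma st15_good_path (E : Finset (Finset (Fin n)))
    (hconn : ∀ u v : Fin n, ∃ L, hreach E L u v) (u v : Fin n) :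
    ∃ (p : ℕ → Fin n) (ee : ℕ → Finset (Fin n)),
      p 0 = u ∧ p (hdist E u v) = v ∧
      (∀ i < hdist E u v, ee i ∈ E ∧ p i ∈ ee i ∧ p (i + 1) ∈ ee i) ∧
      (∀ i < hdist E u v, ∀ j < hdist E u v, ee i = ee j → i = j) := by
  classical
  set L := hdist E u v with hLdef
  have hne : {L' | hreach E L' u v}.Nonempty := hconn u v
  have hmem : hreach E L u v := Nat.sInf_mem hne
  obtain ⟨p, hp0, hpL, hstep⟩ := hmem
  have hch : ∀ i, ∃ e : Finset (Fin n), i < L → e ∈ E ∧ p i ∈ e ∧ p (i + 1) ∈ e := by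
    intro i
    by_cases h : i < L
    · obtain ⟨e, he, h1, h2⟩ := hstep i h
      exact ⟨e, fun _ => ⟨he, h1, h2⟩⟩
    · exact ⟨∅, fun hc => absurd hc h⟩
  choose ee hee using hch
  refine ⟨p, ee, hp0, hpL, fun i hi => hee i hi, ?_⟩
  -- injectivity: a repeated edge would give a shorter walk
  have hshort : ∀ i j : ℕ, i < j → j < L → ee i = ee j → False := by
    intro i j hij hj heq
    set t := j - i with ht
    have h1t : 1 ≤ t := by omega
    have hreach' : hreach E (L - t) u v := by
      refine ⟨fun m => if m ≤ i then p m else p (m + t), ?_, ?_, ?_⟩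
      · show (if 0 ≤ i then p 0 else p (0 + t)) = u
        simp [hp0]
      · show (if L - t ≤ i then p (L - t) else p (L - t + t)) = v
        rw [if_neg (by omega)]
        rw [show L - t + t = L from by omega, hpL]
      · intro m hm
        rcases lt_trichotomy m i with hmi | rfl | hmi
        · obtain ⟨he, h1, h2⟩ := hee m (by omega)
          refine ⟨ee m, he, ?_, ?_⟩
          · show (if m ≤ i then p m else p (m + t)) ∈ ee m
            rw [if_pos (by omega)]; exact h1
          · show (if m + 1 ≤ i then p (m + 1) else p (m + 1 + t)) ∈ ee m
            rw [if_pos (by omega)]; exact h2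
        · obtain ⟨hje, hj1, hj2⟩ := hee j hj
          obtain ⟨hie, hi1, hi2⟩ := hee m (by omega)
          refine ⟨ee j, hje, ?_, ?_⟩
          · show (if m ≤ m then p m else p (m + t)) ∈ ee j
            rw [if_pos (le_refl m), ← heq]; exact hi1
          · show (if m + 1 ≤ m then p (m + 1) else p (m + 1 + t)) ∈ ee j
            rw [if_neg (by omega)]
            rw [show m + 1 + t = j + 1 from by omega]
            exact hj2
        · obtain ⟨he, h1, h2⟩ := hee (m + t) (by omega)
          refine ⟨ee (m + t), he, ?_, ?_⟩
          · show (if m ≤ i then p m else p (m + t)) ∈ ee (m + t)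
            rw [if_neg (by omega)]; exact h1
          · show (if m + 1 ≤ i then p (m + 1) else p (m + 1 + t)) ∈ ee (m + t)
            rw [if_neg (by omega)]
            rw [show m + 1 + t = m + t + 1 from by omega]
            exact h2
    have : L ≤ L - t := Nat.sInf_le hreach'
    omega
  intro i hi j hj heq
  rcases lt_trichotomy i j with h | h | h
  · exact absurd heq.symm fun hc => hshort i j h hj heq
  · exact h
  · exact absurd heq fun hc => hshort j i h hi heq.symm

lemma st15_one_le_hdeg (hn : 2 ≤ n) (E : Finset (Finset (Fin n)))
    (hconn : ∀ u v : Fin n, ∃ L, hreach E L u v) (v : Fin n) :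
    1 ≤ hdeg E v := by
  have : ∃ u : Fin n, u ≠ v := by
    rcases eq_or_ne v ⟨0, by omega⟩ with rfl | h
    · exact ⟨⟨1, by omega⟩, by simp [Fin.ext_iff]⟩
    · exact ⟨⟨0, by omega⟩, fun hc => h (by rw [← hc])⟩
  obtain ⟨u, hu⟩ := this
  obtain ⟨L, p, hp0, hpL, hstep⟩ := hconn v u
  have hL : L ≠ 0 := by
    rintro rfl
    exact hu (hpL ▸ hp0.symm ▸ rfl)
  obtain ⟨e, he, h1, h2⟩ := hstep 0 (by omega)
  rw [hdeg]
  rw [Nat.succ_le_iff]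
  apply Finset.card_pos.mpr
  exact ⟨e, Finset.mem_filter.mpr ⟨he, hp0 ▸ h1⟩⟩

lemma st15_hdist_le (E : Finset (Finset (Fin n))) (u v : Fin n) :
    hdist E u v ≤ ⨆ u : Fin n, ⨆ v : Fin n, hdist E u v := by
  have h1 : hdist E u v ≤ ⨆ v' : Fin n, hdist E u v' :=
    le_ciSup (Set.Finite.bddAbove (Set.finite_range _)) v
  exact h1.trans (le_ciSup (f := fun u : Fin n => ⨆ v' : Fin n, hdist E u v')
    (Set.Finite.bddAbove (Set.finite_range _)) u)

lemma st15_key (n k d : ℕ) (hk : 2 ≤ k) (E : Finset (Finset (Fin n)))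
    (hunif : ∀ e ∈ E, e.card = k)
    (hconn : ∀ u v : Fin n, ∃ L, hreach E L u v)
    (hd : d = ⨆ u : Fin n, ⨆ v : Fin n, hdist E u v)
    (hdegpos : ∀ v, 1 ≤ hdeg E v)
    (f : Fin n → ℝ) (hsum : ∑ v : Fin n, (hdeg E v : ℝ) * f v = 0)
    (hpos : 0 < ∑ v : Fin n, (hdeg E v : ℝ) * f v ^ 2) :
    ∑ v : Fin n, (hdeg E v : ℝ) * f v ^ 2
      < (∑ v : Fin n, (hdeg E v : ℝ)) * (d : ℝ) * ((k : ℝ) - 1) * st15Q E k f := by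
  classical
  have hk1 : (0:ℝ) < (k:ℝ) - 1 := by
    have : (2:ℝ) ≤ (k:ℝ) := by exact_mod_cast hk
    linarith
  have hnn : (Finset.univ : Finset (Fin n)).Nonempty := by
    by_contra h
    rw [Finset.not_nonempty_iff_eq_empty] at h
    rw [h] at hpos
    simp at hpos
  obtain ⟨u, -, hu⟩ := Finset.exists_max_image Finset.univ (fun v => f v ^ 2) hnn
  have hfu : f u ≠ 0 := by
    intro h0
    have hz : ∀ v : Fin n, f v = 0 := by
      intro v
      have h1 := hu v (Finset.mem_univ v)
      rw [h0] at h1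
      nlinarith [sq_nonneg (f v)]
    have : ∑ v : Fin n, (hdeg E v : ℝ) * f v ^ 2 = 0 :=
      Finset.sum_eq_zero fun v _ => by rw [hz v]; ring
    linarith
  have hex : ∃ v0 : Fin n, f u * f v0 < 0 := by
    by_contra h
    push_neg at h
    have h0 : ∑ v : Fin n, (hdeg E v : ℝ) * (f u * f v) = 0 := by
      rw [Finset.sum_congr rfl (fun v (_ : v ∈ Finset.univ) => show
        (hdeg E v : ℝ) * (f u * f v) = f u * ((hdeg E v : ℝ) * f v) from by ring)]
      rw [← Finset.mul_sum, hsum, mul_zero]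
    have hlt : 0 < ∑ v : Fin n, (hdeg E v : ℝ) * (f u * f v) := by
      apply Finset.sum_pos'
      · intro v _
        exact mul_nonneg (Nat.cast_nonneg _) (h v)
      · refine ⟨u, Finset.mem_univ u, ?_⟩
        have hdu : (1:ℝ) ≤ (hdeg E u : ℝ) := by exact_mod_cast hdegpos u
        have : 0 < f u * f u := by
          rcases lt_or_gt_of_ne hfu with h' | h' <;> nlinarith
        nlinarith
    linarith
  obtain ⟨v0, hv0⟩ := hex
  have huv : u ≠ v0 := by rintro rfl; nlinarith
  have hL1 : 1 ≤ hdist E u v0 := by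
    rcases Nat.eq_zero_or_pos (hdist E u v0) with h0 | h
    · exfalso
      have hmem : hreach E (hdist E u v0) u v0 := Nat.sInf_mem (hconn u v0)
      rw [h0] at hmem
      obtain ⟨p, hp0, hpL, -⟩ := hmem
      exact huv (by rw [← hp0, ← hpL])
    · exact h
  have hLd : hdist E u v0 ≤ d := hd ▸ st15_hdist_le E u v0
  obtain ⟨p, ee, hp0, hpL, hedge, hinj⟩ := st15_good_path E hconn u v0
  set L := hdist E u v0 with hLdef
  have hQnn : 0 ≤ st15Q E k f :=
    Finset.sum_nonneg fun e he => st15Te_nonneg hk (hunif e he) f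
  have hpath : ∑ i ∈ Finset.range L, st15Te k f (ee i) ≤ st15Q E k f := by
    rw [← Finset.sum_image (f := fun e => st15Te k f e) (g := ee)
      (fun x hx y hy hxy => hinj x (Finset.mem_range.mp hx) y (Finset.mem_range.mp hy) hxy)]
    apply Finset.sum_le_sum_of_subset_of_nonneg
    · intro e he'
      rw [Finset.mem_image] at he'
      obtain ⟨i, hi, rfl⟩ := he'
      exact (hedge i (Finset.mem_range.mp hi)).1
    · intro e heE _
      exact st15Te_nonneg hk (hunif e heE) f
  have hsteps : ∑ i ∈ Finset.range L, (f (p i) - f (p (i + 1))) ^ 2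
      ≤ ((k:ℝ) - 1) * st15Q E k f := by
    calc ∑ i ∈ Finset.range L, (f (p i) - f (p (i + 1))) ^ 2
        ≤ ∑ i ∈ Finset.range L, ((k:ℝ) - 1) * st15Te k f (ee i) := by
          apply Finset.sum_le_sum
          intro i hi
          have hi' := Finset.mem_range.mp hi
          obtain ⟨heE, hm1, hm2⟩ := hedge i hi'
          exact st15Te_pair hk (hunif _ heE) f hm1 hm2
      _ = ((k:ℝ) - 1) * ∑ i ∈ Finset.range L, st15Te k f (ee i) := by
          rw [Finset.mul_sum]
      _ ≤ ((k:ℝ) - 1) * st15Q E k f := by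
          exact mul_le_mul_of_nonneg_left hpath (le_of_lt hk1)
  have htel : f u - f v0 = ∑ i ∈ Finset.range L, (f (p i) - f (p (i + 1))) := by
    rw [Finset.sum_range_sub' (fun i => f (p i)) L, hp0, hpL]
  have hCS : (f u - f v0) ^ 2 ≤ (L:ℝ) * ∑ i ∈ Finset.range L, (f (p i) - f (p (i + 1))) ^ 2 := by
    rw [htel]
    have h := sq_sum_le_card_mul_sum_sq (s := Finset.range L)
      (f := fun i => f (p i) - f (p (i + 1)))
    rw [Finset.card_range] at h
    exact h
  have hvol : 0 < ∑ v : Fin n, (hdeg E v : ℝ) := by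
    apply Finset.sum_pos'
    · intro v _; exact Nat.cast_nonneg _
    · refine ⟨u, Finset.mem_univ u, ?_⟩
      have : (1:ℝ) ≤ (hdeg E u : ℝ) := by exact_mod_cast hdegpos u
      linarith
  have hSle : ∑ v : Fin n, (hdeg E v : ℝ) * f v ^ 2
      ≤ (∑ v : Fin n, (hdeg E v : ℝ)) * f u ^ 2 := by
    rw [Finset.sum_mul]
    apply Finset.sum_le_sum
    intro v _
    exact mul_le_mul_of_nonneg_left (hu v (Finset.mem_univ v)) (Nat.cast_nonneg _)
  have h2 : f u ^ 2 < f u * (f u - f v0) := by nlinarith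
  have h3 : f u * (f u - f v0) ≤ (f u - f v0) ^ 2 := by nlinarith [sq_nonneg (f v0)]
  have h4 : (f u - f v0) ^ 2 ≤ (d:ℝ) * (((k:ℝ) - 1) * st15Q E k f) := by
    have hLd' : (L:ℝ) ≤ (d:ℝ) := by exact_mod_cast hLd
    calc (f u - f v0) ^ 2
        ≤ (L:ℝ) * (((k:ℝ) - 1) * st15Q E k f) :=
          le_trans hCS (mul_le_mul_of_nonneg_left hsteps (Nat.cast_nonneg _))
      _ ≤ (d:ℝ) * (((k:ℝ) - 1) * st15Q E k f) :=
          mul_le_mul_of_nonneg_right hLd' (mul_nonneg (le_of_lt hk1) hQnn)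
  calc ∑ v : Fin n, (hdeg E v : ℝ) * f v ^ 2
      ≤ (∑ v : Fin n, (hdeg E v : ℝ)) * f u ^ 2 := hSle
    _ < (∑ v : Fin n, (hdeg E v : ℝ)) * (f u * (f u - f v0)) :=
        (mul_lt_mul_iff_right₀ hvol).mpr h2
    _ ≤ (∑ v : Fin n, (hdeg E v : ℝ)) * ((f u - f v0) ^ 2) :=
        mul_le_mul_of_nonneg_left h3 (le_of_lt hvol)
    _ ≤ (∑ v : Fin n, (hdeg E v : ℝ)) * ((d:ℝ) * (((k:ℝ) - 1) * st15Q E k f)) :=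
        mul_le_mul_of_nonneg_left h4 (le_of_lt hvol)
    _ = (∑ v : Fin n, (hdeg E v : ℝ)) * (d : ℝ) * ((k : ℝ) - 1) * st15Q E k f := by ring

set_option maxHeartbeats 1000000 in
lemma st15_final (n k d : ℕ) (hn : 2 ≤ n) (hk : 2 ≤ k) (E : Finset (Finset (Fin n)))
    (hunif : ∀ e ∈ E, e.card = k)
    (hconn : ∀ u v : Fin n, ∃ L, hreach E L u v)
    (hd : d = ⨆ u : Fin n, ⨆ v : Fin n, hdist E u v)
    (i : Fin n) (hi : (i : ℕ) = 1) :
    2 / ((d : ℝ) * (k : ℝ) * ((k : ℝ) - 1) ^ 2 * (∑ v : Fin n, (hdeg E v : ℝ))) <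
      eigsAsc (normLap E) i := by
  classical
  have hH : (normLap E).IsHermitian := st15_herm E
  have hdegpos : ∀ v, 1 ≤ hdeg E v := st15_one_le_hdeg hn E hconn
  have hk1 : (0:ℝ) < (k:ℝ) - 1 := by
    have : (2:ℝ) ≤ (k:ℝ) := by exact_mod_cast hk
    linarith
  rw [eigsAsc, dif_pos hH]
  rw [Function.comp_apply]
  set σ := Tuple.sort hH.eigenvalues with hσ
  set z : Fin n := ⟨0, by omega⟩ with hz
  set i0 := σ z with hi0
  set i1 := σ i with hi1
  set lam := hH.eigenvalues i1 with hlamdef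
  -- sorted eigenvalues
  have hzval : (z : ℕ) = 0 := rfl
  have hmono : hH.eigenvalues i0 ≤ lam := by
    apply Tuple.monotone_sort hH.eigenvalues
    show z ≤ i
    rw [Fin.le_def]
    omega
  have hne01 : i0 ≠ i1 := by
    intro h
    have h3 : (z : ℕ) = (i : ℕ) := congrArg Fin.val (σ.injective h)
    omega
  -- orthonormal basis of eigenvectors
  have hip : ∀ a b : Fin n,
      ∑ v : Fin n, hH.eigenvectorBasis a v * hH.eigenvectorBasis b v
        = if a = b then (1:ℝ) else 0 := by
    intro a b
    have h := orthonormal_iff_ite.mp hH.eigenvectorBasis.orthonormal a b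
    rw [PiLp.inner_apply] at h
    simpa [mul_comm] using h
  have hmv0 : ∀ (j : Fin n) (v : Fin n),
      (normLap E).mulVec (fun u => hH.eigenvectorBasis j u) v
        = hH.eigenvalues j * hH.eigenvectorBasis j v := by
    intro j v
    exact congrFun (hH.mulVec_eigenvectorBasis j) v
  -- square roots of degrees
  set sq : Fin n → ℝ := fun v => Real.sqrt (hdeg E v) with hsqdef
  have hsqpos : ∀ v, 0 < sq v := by
    intro v
    apply Real.sqrt_pos.mpr
    have := hdegpos v
    exact_mod_cast Nat.lt_of_lt_of_le Nat.zero_lt_one this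
  set c0 := ∑ v : Fin n, sq v * hH.eigenvectorBasis i0 v with hc0
  set c1 := ∑ v : Fin n, sq v * hH.eigenvectorBasis i1 v with hc1
  obtain ⟨a, b, hab, horth⟩ : ∃ a b : ℝ, 0 < a^2 + b^2 ∧ a * c0 + b * c1 = 0 := by
    by_cases hc : c0 = 0 ∧ c1 = 0
    · exact ⟨1, 0, by norm_num, by rw [hc.1, hc.2]; ring⟩
    · refine ⟨-c1, c0, ?_, by ring⟩
      rcases not_and_or.mp hc with h | h
      · have : 0 < c0^2 := by positivity
        nlinarith [sq_nonneg c1]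
      · have : 0 < c1^2 := by positivity
        nlinarith [sq_nonneg c0]
  set g : Fin n → ℝ := fun v => a * hH.eigenvectorBasis i0 v + b * hH.eigenvectorBasis i1 v
    with hg
  have hmvg : ∀ v, (normLap E).mulVec g v
      = a * (hH.eigenvalues i0 * hH.eigenvectorBasis i0 v)
        + b * (lam * hH.eigenvectorBasis i1 v) := by
    intro v
    have hsplit : (normLap E).mulVec g v
        = a * ((normLap E).mulVec (fun u => hH.eigenvectorBasis i0 u) v)
          + b * ((normLap E).mulVec (fun u => hH.eigenvectorBasis i1 u) v) := by
      simp only [Matrix.mulVec, dotProduct, hg]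
      rw [Finset.sum_congr rfl (fun u (_ : u ∈ Finset.univ) => show
        normLap E v u * (a * hH.eigenvectorBasis i0 u + b * hH.eigenvectorBasis i1 u)
        = a * (normLap E v u * hH.eigenvectorBasis i0 u)
          + b * (normLap E v u * hH.eigenvectorBasis i1 u) from by ring)]
      rw [Finset.sum_add_distrib, ← Finset.mul_sum, ← Finset.mul_sum]
    rw [hsplit, hmv0 i0 v, hmv0 i1 v]
  have hQg : ∑ v : Fin n, g v * ((normLap E).mulVec g) v
      = a^2 * hH.eigenvalues i0 + b^2 * lam := by
    rw [Finset.sum_congr rfl (fun v (_ : v ∈ Finset.univ) => show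
      g v * ((normLap E).mulVec g) v
      = (a * a * hH.eigenvalues i0) * (hH.eigenvectorBasis i0 v * hH.eigenvectorBasis i0 v)
        + ((a * b * lam) * (hH.eigenvectorBasis i0 v * hH.eigenvectorBasis i1 v)
        + ((a * b * hH.eigenvalues i0) * (hH.eigenvectorBasis i1 v * hH.eigenvectorBasis i0 v)
        + (b * b * lam) * (hH.eigenvectorBasis i1 v * hH.eigenvectorBasis i1 v))) from by
        rw [hmvg v, hg]; ring)]
    rw [Finset.sum_add_distrib, Finset.sum_add_distrib, Finset.sum_add_distrib,
      ← Finset.mul_sum, ← Finset.mul_sum, ← Finset.mul_sum, ← Finset.mul_sum,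
      hip i0 i0, hip i0 i1, hip i1 i0, hip i1 i1]
    rw [if_pos rfl, if_pos rfl, if_neg hne01, if_neg (Ne.symm hne01)]
    ring
  have hSg : ∑ v : Fin n, g v * g v = a^2 + b^2 := by
    rw [Finset.sum_congr rfl (fun v (_ : v ∈ Finset.univ) => show
      g v * g v
      = (a * a) * (hH.eigenvectorBasis i0 v * hH.eigenvectorBasis i0 v)
        + ((a * b) * (hH.eigenvectorBasis i0 v * hH.eigenvectorBasis i1 v)
        + ((a * b) * (hH.eigenvectorBasis i1 v * hH.eigenvectorBasis i0 v)
        + (b * b) * (hH.eigenvectorBasis i1 v * hH.eigenvectorBasis i1 v))) from by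
        rw [hg]; ring)]
    rw [Finset.sum_add_distrib, Finset.sum_add_distrib, Finset.sum_add_distrib,
      ← Finset.mul_sum, ← Finset.mul_sum, ← Finset.mul_sum, ← Finset.mul_sum,
      hip i0 i0, hip i0 i1, hip i1 i0, hip i1 i1]
    rw [if_pos rfl, if_pos rfl, if_neg hne01, if_neg (Ne.symm hne01)]
    ring
  have hOg : ∑ v : Fin n, sq v * g v = 0 := by
    rw [Finset.sum_congr rfl (fun v (_ : v ∈ Finset.univ) => show
      sq v * g v = a * (sq v * hH.eigenvectorBasis i0 v)
        + b * (sq v * hH.eigenvectorBasis i1 v) from by rw [hg]; ring)]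
    rw [Finset.sum_add_distrib, ← Finset.mul_sum, ← Finset.mul_sum, ← hc0, ← hc1]
    exact horth
  -- pass to the degree-normalized vector f
  set f : Fin n → ℝ := fun v => ((hdeg E v : ℝ)) ^ (-(1/2) : ℝ) * g v with hf
  have hginv : ∀ v, g v = sq v * f v := by
    intro v
    have hsne : sq v ≠ 0 := ne_of_gt (hsqpos v)
    have hrpow : ((hdeg E v : ℝ)) ^ (-(1/2) : ℝ) = (sq v)⁻¹ := by
      show ((hdeg E v : ℝ)) ^ (-(1/2) : ℝ) = (Real.sqrt ((hdeg E v : ℕ) : ℝ))⁻¹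
      rw [Real.sqrt_eq_rpow, ← Real.rpow_neg (Nat.cast_nonneg _)]
    show g v = sq v * (((hdeg E v : ℝ)) ^ (-(1/2) : ℝ) * g v)
    rw [hrpow]
    field_simp
  have hd2 : ∀ v, (hdeg E v : ℝ) = sq v * sq v :=
    fun v => (Real.mul_self_sqrt (Nat.cast_nonneg _)).symm
  have hsum0 : ∑ v : Fin n, (hdeg E v : ℝ) * f v = 0 := by
    rw [Finset.sum_congr rfl (fun v (_ : v ∈ Finset.univ) => show
      (hdeg E v : ℝ) * f v = sq v * g v from by rw [hd2 v, hginv v]; ring)]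
    exact hOg
  have hSf : ∑ v : Fin n, (hdeg E v : ℝ) * f v ^ 2 = a^2 + b^2 := by
    rw [Finset.sum_congr rfl (fun v (_ : v ∈ Finset.univ) => show
      (hdeg E v : ℝ) * f v ^ 2 = g v * g v from by rw [hd2 v, hginv v]; ring)]
    exact hSg
  have hposf : 0 < ∑ v : Fin n, (hdeg E v : ℝ) * f v ^ 2 := by rw [hSf]; exact hab
  have hQf : st15Q E k f = a^2 * hH.eigenvalues i0 + b^2 * lam :=
    (st15_quadform hk E hunif g).symm.trans hQg
  have hkey := st15_key n k d hk E hunif hconn hd hdegpos f hsum0 hposf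
  rw [hSf] at hkey
  clear_value f g c0 c1 sq lam i1 i0 z σ
  -- numeric assembly
  set vol := ∑ v : Fin n, (hdeg E v : ℝ) with hvoldef
  have hvol : 0 < vol := by
    apply Finset.sum_pos'
    · intro v _; exact Nat.cast_nonneg _
    · refine ⟨⟨0, by omega⟩, Finset.mem_univ _, ?_⟩
      have : (1:ℝ) ≤ (hdeg E ⟨0, by omega⟩ : ℝ) := by exact_mod_cast hdegpos _
      linarith
  have hQnn : 0 ≤ st15Q E k f :=
    Finset.sum_nonneg fun e he => st15Te_nonneg hk (hunif e he) f
  have hQle : st15Q E k f ≤ lam * (a^2 + b^2) := by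
    rw [hQf]
    nlinarith [hmono, sq_nonneg a, sq_nonneg b]
  have hd1 : 1 ≤ d := by
    rw [hd]
    have h01 : (⟨0, by omega⟩ : Fin n) ≠ (⟨1, by omega⟩ : Fin n) := by
      simp [Fin.ext_iff]
    have h1le : 1 ≤ hdist E ⟨0, by omega⟩ ⟨1, by omega⟩ := by
      rcases Nat.eq_zero_or_pos (hdist E ⟨0, by omega⟩ ⟨1, by omega⟩) with h0 | h
      · exfalso
        have hmem : hreach E (hdist E ⟨0, by omega⟩ ⟨1, by omega⟩) ⟨0, by omega⟩ ⟨1, by omega⟩ :=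
          Nat.sInf_mem (hconn _ _)
        rw [h0] at hmem
        obtain ⟨p, hp0, hpL, -⟩ := hmem
        exact h01 (by rw [← hp0, ← hpL])
      · exact h
    exact h1le.trans (st15_hdist_le E _ _)
  have hd0 : (1:ℝ) ≤ (d:ℝ) := by exact_mod_cast hd1
  have hQpos : 0 < st15Q E k f := by
    rcases lt_or_eq_of_le hQnn with h | h
    · exact h
    · exfalso
      rw [← h, mul_zero] at hkey
      nlinarith [hab]
  have hC : (0:ℝ) < vol * (d:ℝ) * ((k:ℝ) - 1) := by positivity
  have hlam : 1 / (vol * (d:ℝ) * ((k:ℝ) - 1)) < lam := by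
    rw [div_lt_iff₀ hC]
    nlinarith [mul_le_mul_of_nonneg_left hQle (le_of_lt hC), hkey, hab, hQpos]
  have hden1 : (0:ℝ) < (d : ℝ) * (k : ℝ) * ((k : ℝ) - 1) ^ 2 * vol := by
    have hkpos : (0:ℝ) < (k:ℝ) := by positivity
    positivity
  have hfinal : 2 / ((d : ℝ) * (k : ℝ) * ((k : ℝ) - 1) ^ 2 * vol)
      ≤ 1 / (vol * (d:ℝ) * ((k:ℝ) - 1)) := by
    rw [div_le_div_iff₀ hden1 hC]
    have hkk : (2:ℝ) ≤ (k:ℝ) * ((k:ℝ) - 1) := by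
      have : (2:ℝ) ≤ (k:ℝ) := by exact_mod_cast hk
      nlinarith
    have h6nn : (0:ℝ) ≤ vol * (d:ℝ) * ((k:ℝ) - 1) := le_of_lt hC
    nlinarith [mul_le_mul_of_nonneg_left hkk h6nn]
  linarith

theorem stmt15 (n k d : ℕ) (hn : 2 ≤ n) (hk : 2 ≤ k) (E : Finset (Finset (Fin n)))
    (hunif : ∀ e ∈ E, e.card = k)
    (hconn : ∀ u v : Fin n, ∃ L, hreach E L u v)
    (hd : d = ⨆ u : Fin n, ⨆ v : Fin n, hdist E u v) :
    2 / ((d : ℝ) * (k : ℝ) * ((k : ℝ) - 1) ^ 2 * (∑ v : Fin n, (hdeg E v : ℝ))) <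
      eigsAsc (normLap E) ⟨1, by omega⟩ := by
  exact st15_final n k d hn hk E hunif hconn hd ⟨1, by omega⟩ rfl
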